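/- Let m be a nonnegative integer and let a, b > 0 be real numbers. Then ∫_0^π sin^m(x) · (a cos²x + b sin²x)^{-(m+2)/2} dx = (√π / (a^{1/2} b^{(m+1)/2})) · Γ((m+1)/2) / Γ(m/2 + 1). -/

import Mathlib

open MeasureTheory Real


lemma sin_pow_int (m : ℕ) : ∫ x in (0:ℝ)..π, Real.sin x ^ m
    = Real.sqrt π * (Real.Gamma (((m:ℝ)+1)/2) / Real.Gamma ((m:ℝ)/2+1)) := by
  have hs : (0:ℝ) < Real.sqrt π := Real.sqrt_pos.2 Real.pi_pos
  induction m using Nat.twoStepInduction with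
  | zero =>
    norm_num [Real.Gamma_one]
    rw [Real.Gamma_one_half_eq, Real.mul_self_sqrt Real.pi_pos.le]
  | one =>
    have h32 : Real.Gamma ((3:ℝ)/2) = Real.sqrt π / 2 := by
      rw [show (3:ℝ)/2 = 1/2 + 1 by norm_num, Real.Gamma_add_one (by norm_num),
        Real.Gamma_one_half_eq]; ring
    norm_num [h32]
    field_simp
  | more n ih _ =>
    have h := integral_sin_pow n (a := 0) (b := π)
    simp [Real.sin_pi] at h
    rw [h, ih]
    push_cast
    have h1 : Real.Gamma (((n:ℝ)+2+1)/2) = (((n:ℝ)+1)/2) * Real.Gamma (((n:ℝ)+1)/2) := by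
      rw [show ((n:ℝ)+2+1)/2 = ((n:ℝ)+1)/2 + 1 by ring]
      exact Real.Gamma_add_one (by positivity)
    have h2 : Real.Gamma (((n:ℝ)+2)/2+1) = ((n:ℝ)/2+1) * Real.Gamma ((n:ℝ)/2+1) := by
      rw [show ((n:ℝ)+2)/2+1 = ((n:ℝ)/2+1) + 1 by ring]
      exact Real.Gamma_add_one (by positivity)
    have hg : Real.Gamma ((n:ℝ)/2+1) ≠ 0 := (Real.Gamma_pos_of_pos (by positivity)).ne'
    rw [h1, h2]
    field_simp



noncomputable def subf (c : ℝ) (x : ℝ) : ℝ :=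
  x + Real.arctan ((c - 1) * (Real.sin x * Real.cos x) /
      (Real.cos x ^ 2 + c * Real.sin x ^ 2))

lemma Dpos {c : ℝ} (hc : 0 < c) (x : ℝ) : 0 < Real.cos x ^ 2 + c * Real.sin x ^ 2 := by
  rcases le_total c 1 with h | h
  · nlinarith [mul_nonneg (sub_nonneg.2 h) (sq_nonneg (Real.cos x)), Real.sin_sq_add_cos_sq x]
  · nlinarith [mul_nonneg (sub_nonneg.2 h) (sq_nonneg (Real.sin x)), Real.sin_sq_add_cos_sq x]

lemma Upos {c : ℝ} (hc : 0 < c) (x : ℝ) : 0 < Real.cos x ^ 2 + c ^ 2 * Real.sin x ^ 2 :=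
  Dpos (pow_pos hc 2) x

lemma h1t {c : ℝ} (hc : 0 < c) (x : ℝ) :
    1 + ((c - 1) * (Real.sin x * Real.cos x) /
        (Real.cos x ^ 2 + c * Real.sin x ^ 2)) ^ 2
      = (Real.cos x ^ 2 + c ^ 2 * Real.sin x ^ 2)
          / (Real.cos x ^ 2 + c * Real.sin x ^ 2) ^ 2 := by
  have hD := (Dpos hc x).ne'
  field_simp
  linear_combination (Real.cos x ^ 2 + c ^ 2 * Real.sin x ^ 2) * (Real.sin_sq_add_cos_sq x)

lemma sin_subf {c : ℝ} (hc : 0 < c) (x : ℝ) :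
    Real.sin (subf c x) =
      c * Real.sin x / Real.sqrt (Real.cos x ^ 2 + c ^ 2 * Real.sin x ^ 2) := by
  have hDpos := Dpos hc x
  have hUpos := Upos hc x
  have hsq : Real.sqrt (1 + ((c - 1) * (Real.sin x * Real.cos x) /
        (Real.cos x ^ 2 + c * Real.sin x ^ 2)) ^ 2)
      = Real.sqrt (Real.cos x ^ 2 + c ^ 2 * Real.sin x ^ 2)
          / (Real.cos x ^ 2 + c * Real.sin x ^ 2) := by
    rw [h1t hc x, Real.sqrt_div hUpos.le, Real.sqrt_sq hDpos.le]
  have hsU : 0 < Real.sqrt (Real.cos x ^ 2 + c ^ 2 * Real.sin x ^ 2) :=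
    Real.sqrt_pos.2 hUpos
  rw [subf, Real.sin_add, Real.sin_arctan, Real.cos_arctan, hsq]
  field_simp
  have hsU' : 0 < Real.sqrt (Real.cos x ^ 2 + Real.sin x ^ 2 * c ^ 2) := by
    rw [show Real.cos x ^ 2 + Real.sin x ^ 2 * c ^ 2 = Real.cos x ^ 2 + c ^ 2 * Real.sin x ^ 2 by ring]
    exact hsU
  have hD' : 0 < Real.cos x ^ 2 + Real.sin x ^ 2 * c := by linarith
  rw [div_eq_div_iff (mul_pos hsU' hD').ne' hsU'.ne']
  linear_combination (Real.sin x * (Real.cos x ^ 2 + Real.sin x ^ 2 * c) *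
    Real.sqrt (Real.cos x ^ 2 + Real.sin x ^ 2 * c ^ 2) * c) * (Real.sin_sq_add_cos_sq x)

lemma hasDerivAt_subf {c : ℝ} (hc : 0 < c) (x : ℝ) :
    HasDerivAt (subf c) (c / (Real.cos x ^ 2 + c ^ 2 * Real.sin x ^ 2)) x := by
  have hDpos := Dpos hc x
  have hUpos := Upos hc x
  have hN : HasDerivAt (fun y => (c - 1) * (Real.sin y * Real.cos y))
      ((c - 1) * (Real.cos x ^ 2 - Real.sin x ^ 2)) x := by
    have h := ((Real.hasDerivAt_sin x).mul (Real.hasDerivAt_cos x)).const_mul (c - 1)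
    exact h.congr_deriv (by ring)
  have hD : HasDerivAt (fun y => Real.cos y ^ 2 + c * Real.sin y ^ 2)
      (2 * (c - 1) * (Real.sin x * Real.cos x)) x := by
    have h := (((Real.hasDerivAt_cos x).pow 2).add
      (((Real.hasDerivAt_sin x).pow 2).const_mul c))
    exact h.congr_deriv (by push_cast; ring)
  have hq := hN.div hD hDpos.ne'
  have harc := hq.arctan
  have h2 : HasDerivAt (subf c)
      (1 + 1 / (1 + ((c - 1) * (Real.sin x * Real.cos x) /
          (Real.cos x ^ 2 + c * Real.sin x ^ 2)) ^ 2) *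
        (((c - 1) * (Real.cos x ^ 2 - Real.sin x ^ 2) *
            (Real.cos x ^ 2 + c * Real.sin x ^ 2) -
          (c - 1) * (Real.sin x * Real.cos x) *
            (2 * (c - 1) * (Real.sin x * Real.cos x))) /
          (Real.cos x ^ 2 + c * Real.sin x ^ 2) ^ 2)) x := (hasDerivAt_id x).add harc
  have key : (c - 1) * (Real.cos x ^ 2 - Real.sin x ^ 2) *
        (Real.cos x ^ 2 + c * Real.sin x ^ 2) -
      (c - 1) * (Real.sin x * Real.cos x) * (2 * (c - 1) * (Real.sin x * Real.cos x))
      = c - (Real.cos x ^ 2 + c ^ 2 * Real.sin x ^ 2) := by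
    linear_combination ((c - 1) * Real.cos x ^ 2 - c * (c - 1) * Real.sin x ^ 2 + c) *
      (Real.sin_sq_add_cos_sq x)
  rw [h1t hc x, key] at h2
  have hE : 1 + 1 / ((Real.cos x ^ 2 + c ^ 2 * Real.sin x ^ 2) /
        (Real.cos x ^ 2 + c * Real.sin x ^ 2) ^ 2) *
      ((c - (Real.cos x ^ 2 + c ^ 2 * Real.sin x ^ 2)) /
        (Real.cos x ^ 2 + c * Real.sin x ^ 2) ^ 2)
      = c / (Real.cos x ^ 2 + c ^ 2 * Real.sin x ^ 2) := by
    field_simp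
    ring
  rwa [hE] at h2



lemma pointwise (m : ℕ) {a b : ℝ} (ha : 0 < a) (hb : 0 < b) {x : ℝ} (hs : 0 ≤ Real.sin x) :
    Real.sin x ^ m * (a * Real.cos x ^ 2 + b * Real.sin x ^ 2) ^ (-((m : ℝ) + 2) / 2)
      = (a ^ ((1 : ℝ) / 2) * b ^ (((m : ℝ) + 1) / 2))⁻¹ *
          ((Real.sqrt (b / a) / (Real.cos x ^ 2 + Real.sqrt (b / a) ^ 2 * Real.sin x ^ 2)) *
            ((Real.sqrt (b / a) * Real.sin x /
              Real.sqrt (Real.cos x ^ 2 + Real.sqrt (b / a) ^ 2 * Real.sin x ^ 2)) ^ m)) := by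
  have hab : 0 < b / a := div_pos hb ha
  set c := Real.sqrt (b / a) with hcdef
  have hc : 0 < c := Real.sqrt_pos.2 hab
  have hc2 : c ^ 2 = b / a := Real.sq_sqrt hab.le
  set U := Real.cos x ^ 2 + c ^ 2 * Real.sin x ^ 2 with hUdef
  have hU : 0 < U := by
    rcases le_total (c^2) 1 with h | h
    · nlinarith [mul_nonneg (sub_nonneg.2 h) (sq_nonneg (Real.cos x)), Real.sin_sq_add_cos_sq x,
        pow_pos hc 2]
    · nlinarith [mul_nonneg (sub_nonneg.2 h) (sq_nonneg (Real.sin x)), Real.sin_sq_add_cos_sq x]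
  have hq : a * Real.cos x ^ 2 + b * Real.sin x ^ 2 = a * U := by
    have hb' : b = a * c ^ 2 := by rw [hc2]; field_simp
    rw [hb', hUdef]; ring
  -- (√U)^m = U^(m/2)
  have hsqU : Real.sqrt U ^ m = U ^ ((m : ℝ) / 2) := by
    rw [Real.sqrt_eq_rpow, ← Real.rpow_natCast (U ^ ((1:ℝ)/2)) m, ← Real.rpow_mul hU.le]
    congr 1; ring
  -- c ^ (m) etc
  have hcm : (c : ℝ) ^ m * c = (b / a) ^ (((m : ℝ) + 1) / 2) := by
    rw [hcdef, Real.sqrt_eq_rpow, ← Real.rpow_natCast ((b/a) ^ ((1:ℝ)/2)) m,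
      ← Real.rpow_mul hab.le, ← Real.rpow_add hab]
    congr 1; push_cast; ring
  have hUc : U⁻¹ * (U ^ ((m : ℝ) / 2))⁻¹ = U ^ (-((m : ℝ) + 2) / 2) := by
    rw [← Real.rpow_neg_one U, ← Real.rpow_neg hU.le, ← Real.rpow_add hU]
    ring_nf
  have hconst : (a ^ ((1 : ℝ) / 2) * b ^ (((m : ℝ) + 1) / 2))⁻¹ * (b / a) ^ (((m : ℝ) + 1) / 2)
      = a ^ (-((m : ℝ) + 2) / 2) := by
    rw [Real.div_rpow hb.le ha.le]
    rw [show -((m : ℝ) + 2) / 2 = -(((m:ℝ)+1)/2) + (-(1/2) : ℝ) by ring,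
      Real.rpow_add ha, Real.rpow_neg ha.le, Real.rpow_neg ha.le]
    have h1 : b ^ (((m : ℝ) + 1) / 2) ≠ 0 := (Real.rpow_pos_of_pos hb _).ne'
    have h2 : a ^ (((m : ℝ) + 1) / 2) ≠ 0 := (Real.rpow_pos_of_pos ha _).ne'
    have h3 : a ^ ((1:ℝ) / 2) ≠ 0 := (Real.rpow_pos_of_pos ha _).ne'
    field_simp
  rw [hq, Real.mul_rpow ha.le hU.le, div_pow, mul_pow, hsqU]
  rw [← hconst, ← hcm, ← hUc]
  field_simp

/-- For a nonnegative integer `m` and reals `a, b > 0`,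
`∫₀^π sinᵐ x · (a cos²x + b sin²x)^{-(m+2)/2} dx
  = (√π / (a^{1/2} b^{(m+1)/2})) · Γ((m+1)/2) / Γ(m/2 + 1)`. -/
theorem integral_sin_pow_div_quadratic (m : ℕ) (a b : ℝ) (ha : 0 < a) (hb : 0 < b) :
    ∫ x in (0 : ℝ)..π,
        Real.sin x ^ m * (a * Real.cos x ^ 2 + b * Real.sin x ^ 2) ^ (-((m : ℝ) + 2) / 2) =
      Real.sqrt π / (a ^ ((1 : ℝ) / 2) * b ^ (((m : ℝ) + 1) / 2)) *
        (Real.Gamma (((m : ℝ) + 1) / 2) / Real.Gamma ((m : ℝ) / 2 + 1)) := by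
  have hab : 0 < b / a := div_pos hb ha
  set c := Real.sqrt (b / a) with hcdef
  have hc : 0 < c := Real.sqrt_pos.2 hab
  have hderiv : ∀ x ∈ Set.uIcc (0:ℝ) π, HasDerivAt (subf c)
      ((fun y => c / (Real.cos y ^ 2 + c ^ 2 * Real.sin y ^ 2)) x) x :=
    fun x _ => hasDerivAt_subf hc x
  have hUcont : Continuous fun y : ℝ => Real.cos y ^ 2 + c ^ 2 * Real.sin y ^ 2 := by
    continuity
  have hcont : ContinuousOn (fun y : ℝ => c / (Real.cos y ^ 2 + c ^ 2 * Real.sin y ^ 2))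
      (Set.uIcc (0:ℝ) π) :=
    (continuous_const.div hUcont fun y => (Upos hc y).ne').continuousOn
  have hsub := intervalIntegral.integral_comp_smul_deriv hderiv hcont
    (Real.continuous_sin.pow m)
  have h0 : subf c 0 = 0 := by simp [subf]
  have hpi : subf c π = π := by simp [subf]
  rw [h0, hpi] at hsub
  have congr1 : (∫ x in (0:ℝ)..π,
        Real.sin x ^ m * (a * Real.cos x ^ 2 + b * Real.sin x ^ 2) ^ (-((m : ℝ) + 2) / 2))
      = ∫ x in (0:ℝ)..π, (a ^ ((1 : ℝ) / 2) * b ^ (((m : ℝ) + 1) / 2))⁻¹ •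
          ((c / (Real.cos x ^ 2 + c ^ 2 * Real.sin x ^ 2)) •
            Real.sin (subf c x) ^ m) := by
    apply intervalIntegral.integral_congr
    intro x hx
    rw [Set.uIcc_of_le Real.pi_pos.le] at hx
    have hsx : 0 ≤ Real.sin x := Real.sin_nonneg_of_nonneg_of_le_pi hx.1 hx.2
    simp only [smul_eq_mul]
    rw [sin_subf hc x]
    exact pointwise m ha hb hsx
  simp only [Function.comp_apply, Pi.pow_apply] at hsub
  rw [congr1, intervalIntegral.integral_smul, hsub, sin_pow_int m, smul_eq_mul]
  ring
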